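/- arXiv:0707.1718 — 5 statements merged into one kernel-verified Lean document; each statement's English description precedes it below -/
import Mathlib

section
/- Let C be a small category and let Δ/C be the category of simplices of the nerve of C (objects: functors X : [q] → C; morphisms X → Y: monotone maps ξ : [q_X] → [q_Y] with Y ∘ ξ = X). Then every surjective monotone map s_i : [q+1] → [q] induces, for each q-simplex Y, a morphism (X = Y ∘ s_i) → Y in Δ/C which becomes an isomorphism in the quotient category [Δ/C] obtained by identifying, for each surjection s with right inverses d, d', the induced maps d_* and d'_* (taking the smallest composition-compatible equivalence relation generated by these identifications). -/
open CategoryTheory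

/-- The category `Δ/C` of simplices of the nerve of `C`: objects are functors
`[q] ⥤ C`, morphisms are monotone reindexings commuting with the structure maps. -/
abbrev SimplexOver (C : Type) [SmallCategory C] : Type :=
  CostructuredArrow SimplexCategory.toCat (Cat.of C)

/-- The elementary relation: for a surjection `s : [q+1] → [q]` with `B = A ∘ s`,
any two sections of `s` induce elementary equivalent maps `A ⟶ B`. -/
def elemRel (C : Type) [SmallCategory C] : HomRel (SimplexOver C) := fun {A B} f g =>
  ∃ s : B.left ⟶ A.left,
    Function.Surjective s.toOrderHom ∧
    B.left.len = A.left.len + 1 ∧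
    B.hom = SimplexCategory.toCat.map s ≫ A.hom ∧
    f.left ≫ s = 𝟙 A.left ∧ g.left ≫ s = 𝟙 A.left

/-- The quotient category `[Δ/C]` of `Δ/C` by the smallest composition-compatible
equivalence relation generated by the elementary equivalences. -/
abbrev SdQuot (C : Type) [SmallCategory C] : Type :=
  CategoryTheory.Quotient (elemRel C)

/-- A simplex of the nerve of `C` is nondegenerate if it factors through no
noninjective surjection. -/
def Nondeg {C : Type} [SmallCategory C] (X : SimplexOver C) : Prop :=
  ∀ (m : SimplexCategory) (s : X.left ⟶ m),
    Function.Surjective s.toOrderHom →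
    (∃ Y : SimplexCategory.toCat.obj m ⟶ Cat.of C,
      X.hom = SimplexCategory.toCat.map s ≫ Y) →
    Function.Injective s.toOrderHom

/-- The subdivision `Sd(C)`: the full subcategory of `[Δ/C]` spanned by the
nondegenerate simplices of the nerve of `C`. -/
abbrev Sd (C : Type) [SmallCategory C] : Type :=
  ObjectProperty.FullSubcategory (fun X : SdQuot C => Nondeg X.as)

/-- The dimension of an object of `Sd(C)`. -/
def dimS {C : Type} [SmallCategory C] (X : Sd C) : ℕ := X.obj.as.left.len

/-- Lemma 17: a surjection `σᵢ : Y∘σᵢ ⟶ Y` of `Δ/C` becomes an isomorphism in the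
quotient category `[Δ/C]`. -/
theorem surjection_becomes_iso (C : Type) [SmallCategory C] (q : ℕ) (i : Fin (q + 1))
    (Y : SimplexCategory.toCat.obj (SimplexCategory.mk q) ⟶ Cat.of C) :
    IsIso ((CategoryTheory.Quotient.functor (elemRel C)).map
      (CostructuredArrow.homMk (SimplexCategory.σ i) rfl :
        CostructuredArrow.mk (SimplexCategory.toCat.map (SimplexCategory.σ i) ≫ Y) ⟶
          CostructuredArrow.mk Y)) := by
  classical
  set A : SimplexOver C :=
    CostructuredArrow.mk (SimplexCategory.toCat.map (SimplexCategory.σ i) ≫ Y) with hA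
  set B : SimplexOver C := CostructuredArrow.mk Y with hB
  set f : A ⟶ B := CostructuredArrow.homMk (SimplexCategory.σ i) rfl with hf
  -- the candidate inverse, given by the section `δ i.castSucc`
  have hgw : SimplexCategory.toCat.map (SimplexCategory.δ i.castSucc) ≫ A.hom = B.hom := by
    show SimplexCategory.toCat.map (SimplexCategory.δ i.castSucc) ≫
        (SimplexCategory.toCat.map (SimplexCategory.σ i) ≫ Y) = Y
    rw [← Category.assoc, ← SimplexCategory.toCat.map_comp, SimplexCategory.δ_comp_σ_self,
      CategoryTheory.Functor.map_id, Category.id_comp]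
  set g : B ⟶ A := CostructuredArrow.homMk (SimplexCategory.δ i.castSucc) hgw with hg
  -- the auxiliary degenerate simplex one dimension up
  set A' : SimplexOver C :=
    CostructuredArrow.mk (SimplexCategory.toCat.map (SimplexCategory.σ i.castSucc) ≫ A.hom)
    with hA'
  have hdw : SimplexCategory.toCat.map (SimplexCategory.δ i.castSucc.castSucc) ≫ A'.hom
      = A.hom := by
    show SimplexCategory.toCat.map (SimplexCategory.δ i.castSucc.castSucc) ≫
        (SimplexCategory.toCat.map (SimplexCategory.σ i.castSucc) ≫ A.hom) = A.hom
    rw [← Category.assoc, ← SimplexCategory.toCat.map_comp, SimplexCategory.δ_comp_σ_self,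
      CategoryTheory.Functor.map_id, Category.id_comp]
  have hd'w : SimplexCategory.toCat.map (SimplexCategory.δ i.castSucc.succ) ≫ A'.hom
      = A.hom := by
    show SimplexCategory.toCat.map (SimplexCategory.δ i.castSucc.succ) ≫
        (SimplexCategory.toCat.map (SimplexCategory.σ i.castSucc) ≫ A.hom) = A.hom
    rw [← Category.assoc, ← SimplexCategory.toCat.map_comp, SimplexCategory.δ_comp_σ_succ,
      CategoryTheory.Functor.map_id, Category.id_comp]
  set d : A ⟶ A' := CostructuredArrow.homMk (SimplexCategory.δ i.castSucc.castSucc) hdw with hd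
  set d' : A ⟶ A' := CostructuredArrow.homMk (SimplexCategory.δ i.castSucc.succ) hd'w with hd'
  have hpw : SimplexCategory.toCat.map (SimplexCategory.σ i.succ) ≫ A.hom = A'.hom := by
    show SimplexCategory.toCat.map (SimplexCategory.σ i.succ) ≫
        (SimplexCategory.toCat.map (SimplexCategory.σ i) ≫ Y)
      = SimplexCategory.toCat.map (SimplexCategory.σ i.castSucc) ≫
        (SimplexCategory.toCat.map (SimplexCategory.σ i) ≫ Y)
    rw [← Category.assoc, ← Category.assoc, ← SimplexCategory.toCat.map_comp,
      ← SimplexCategory.toCat.map_comp, SimplexCategory.σ_comp_σ (le_refl i)]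
  set p : A' ⟶ A := CostructuredArrow.homMk (SimplexCategory.σ i.succ) hpw with hp
  -- the elementary relation between the two sections of `σ i.castSucc`
  have hrel : elemRel C d d' := by
    refine ⟨SimplexCategory.σ i.castSucc, ?_, rfl, rfl, ?_, ?_⟩
    · intro b
      refine ⟨(SimplexCategory.δ i.castSucc.castSucc).toOrderHom b, ?_⟩
      have := congrArg (fun h : (SimplexCategory.mk (q+1)) ⟶ SimplexCategory.mk (q+1) => h.toOrderHom b)
        (SimplexCategory.δ_comp_σ_self (i := i.castSucc))
      simpa using this
    · exact SimplexCategory.δ_comp_σ_self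
    · exact SimplexCategory.δ_comp_σ_succ
  -- key identities in `Δ/C`
  have h1 : f ≫ g = 𝟙 A ≫ d ≫ p := by
    apply CostructuredArrow.hom_ext
    show SimplexCategory.σ i ≫ SimplexCategory.δ i.castSucc
      = 𝟙 A.left ≫ SimplexCategory.δ i.castSucc.castSucc ≫ SimplexCategory.σ i.succ
    rw [Category.id_comp, SimplexCategory.δ_comp_σ_of_le (le_refl i.castSucc)]
  have h2 : 𝟙 A = 𝟙 A ≫ d' ≫ p := by
    apply CostructuredArrow.hom_ext
    show 𝟙 A.left = 𝟙 A.left ≫ SimplexCategory.δ i.castSucc.succ ≫ SimplexCategory.σ i.succ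
    rw [Category.id_comp, Fin.succ_castSucc, SimplexCategory.δ_comp_σ_self]; rfl
  have h3 : g ≫ f = 𝟙 B := by
    apply CostructuredArrow.hom_ext
    show SimplexCategory.δ i.castSucc ≫ SimplexCategory.σ i = 𝟙 B.left
    exact SimplexCategory.δ_comp_σ_self
  -- the quotient functor
  have hfg : (Quotient.functor (elemRel C)).map f ≫ (Quotient.functor (elemRel C)).map g
      = 𝟙 _ := by
    rw [← Functor.map_comp, h1]
    have : (Quotient.functor (elemRel C)).map (𝟙 A ≫ d ≫ p)
        = (Quotient.functor (elemRel C)).map (𝟙 A ≫ d' ≫ p) :=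
      Quot.sound (HomRel.CompClosure.intro _ _ (𝟙 A) d d' p hrel)
    rw [this, ← h2, CategoryTheory.Functor.map_id]
  have hgf : (Quotient.functor (elemRel C)).map g ≫ (Quotient.functor (elemRel C)).map f
      = 𝟙 _ := by
    rw [← Functor.map_comp, h3, CategoryTheory.Functor.map_id]
  exact ⟨(Quotient.functor (elemRel C)).map g, hfg, hgf⟩
end

section
/- With Δ/C the category of simplices of a small category C and [Δ/C] its quotient by the equivalence relation generated by elementary equivalences of sections of degeneracies, the quotient functor Δ/C → [Δ/C] is the localization of Δ/C at the class of surjections: any functor Δ/C → D sending all surjections to isomorphisms factors uniquely through [Δ/C]. -/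
open CategoryTheory

section AuxLemmas
open SimplexCategory

variable {C : Type} [SmallCategory C]

-- surjectivity of σ
lemma sigma_surj {n : ℕ} (i : Fin (n+1)) : Function.Surjective (σ i).toOrderHom := by
  have h : δ i.succ ≫ σ i = 𝟙 (SimplexCategory.mk n) := δ_comp_σ_succ
  intro y
  refine ⟨(δ i.succ).toOrderHom y, ?_⟩
  have := congrArg (fun f => f.toOrderHom y) h
  simpa [comp_toOrderHom] using this

-- the key elementary lemma
lemma elem_iso {n : ℕ} (i : Fin (n+1))
    (Y : SimplexCategory.toCat.obj (SimplexCategory.mk n) ⟶ Cat.of C)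
    (e : (CostructuredArrow.mk (SimplexCategory.toCat.map (σ i) ≫ Y) : SimplexOver C) ⟶
      CostructuredArrow.mk Y)
    (he : e.left = σ i) :
    IsIso ((Quotient.functor (elemRel C)).map e) := by
  let A : SimplexOver C := CostructuredArrow.mk (SimplexCategory.toCat.map (σ i) ≫ Y)
  -- section g with g.left = δ i.succ
  have wg : SimplexCategory.toCat.map (δ i.succ) ≫ A.hom = Y := by
    show SimplexCategory.toCat.map (δ i.succ) ≫ (SimplexCategory.toCat.map (σ i) ≫ Y) = Y
    rw [← Category.assoc, ← Functor.map_comp, δ_comp_σ_succ, CategoryTheory.Functor.map_id, Category.id_comp]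
  let g : (CostructuredArrow.mk Y : SimplexOver C) ⟶ A := CostructuredArrow.homMk (δ i.succ) wg
  -- object one dimension up
  let A₂ : SimplexOver C := CostructuredArrow.mk (SimplexCategory.toCat.map (σ i.succ) ≫ A.hom)
  have wu₁ : SimplexCategory.toCat.map (δ i.succ.castSucc) ≫ A₂.hom = A.hom := by
    show SimplexCategory.toCat.map (δ i.succ.castSucc) ≫
      (SimplexCategory.toCat.map (σ i.succ) ≫ A.hom) = A.hom
    rw [← Category.assoc, ← Functor.map_comp, δ_comp_σ_self, CategoryTheory.Functor.map_id, Category.id_comp]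
  have wu₂ : SimplexCategory.toCat.map (δ i.succ.succ) ≫ A₂.hom = A.hom := by
    show SimplexCategory.toCat.map (δ i.succ.succ) ≫
      (SimplexCategory.toCat.map (σ i.succ) ≫ A.hom) = A.hom
    rw [← Category.assoc, ← Functor.map_comp, δ_comp_σ_succ, CategoryTheory.Functor.map_id, Category.id_comp]
  let u₁ : A ⟶ A₂ := CostructuredArrow.homMk (δ i.succ.castSucc) wu₁
  let u₂ : A ⟶ A₂ := CostructuredArrow.homMk (δ i.succ.succ) wu₂
  have wh : SimplexCategory.toCat.map (σ i.castSucc) ≫ A.hom = A₂.hom := by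
    show SimplexCategory.toCat.map (σ i.castSucc) ≫ (SimplexCategory.toCat.map (σ i) ≫ Y) =
      SimplexCategory.toCat.map (σ i.succ) ≫ (SimplexCategory.toCat.map (σ i) ≫ Y)
    rw [← Category.assoc, ← Functor.map_comp, σ_comp_σ (le_refl i), Functor.map_comp,
      Category.assoc]
  let h : A₂ ⟶ A := CostructuredArrow.homMk (σ i.castSucc) wh
  -- the elementary relation between u₁ and u₂
  have hrel : elemRel C u₁ u₂ := by
    refine ⟨CostructuredArrow.homMk (σ i.succ) rfl |>.left, ?_, rfl, ?_, ?_, ?_⟩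
    · exact sigma_surj _
    · rfl
    · show u₁.left ≫ σ i.succ = 𝟙 _
      have : u₁.left = δ i.succ.castSucc := rfl
      rw [this, δ_comp_σ_self]; rfl
    · show u₂.left ≫ σ i.succ = 𝟙 _
      have : u₂.left = δ i.succ.succ := rfl
      rw [this, δ_comp_σ_succ]; rfl
  -- g is inverse to e in the quotient
  have hge : g ≫ e = 𝟙 (CostructuredArrow.mk Y) := by
    apply CostructuredArrow.ext
    show g.left ≫ e.left = 𝟙 _
    rw [he]
    show δ i.succ ≫ σ i = _
    rw [δ_comp_σ_succ]; rfl
  have heg : e ≫ g = u₂ ≫ h := by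
    apply CostructuredArrow.ext
    show e.left ≫ g.left = u₂.left ≫ h.left
    rw [he]
    show σ i ≫ δ i.succ = δ i.succ.succ ≫ σ i.castSucc
    rw [δ_comp_σ_of_gt (Fin.castSucc_lt_succ (i := i))]
  have hu₁h : u₁ ≫ h = 𝟙 A := by
    apply CostructuredArrow.ext
    show δ i.succ.castSucc ≫ σ i.castSucc = 𝟙 _
    rw [δ_comp_σ_succ' (Fin.succ_castSucc i).symm]
  refine ⟨(Quotient.functor (elemRel C)).map g, ?_, ?_⟩
  · rw [← Functor.map_comp, heg, Functor.map_comp,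
      (CategoryTheory.Quotient.sound (elemRel C) hrel).symm, ← Functor.map_comp, hu₁h,
      CategoryTheory.Functor.map_id]
  · rw [← Functor.map_comp, hge, CategoryTheory.Functor.map_id]

lemma iso_of_bij {A B : SimplexOver C} (f : A ⟶ B)
    (hinj : Function.Injective f.left.toOrderHom)
    (hsurj : Function.Surjective f.left.toOrderHom) : IsIso f := by
  haveI : IsIso f.left := isIso_of_bijective ⟨hinj, hsurj⟩
  refine ⟨CostructuredArrow.homMk (inv f.left) ?_, ?_, ?_⟩
  · rw [← CostructuredArrow.w f, ← Category.assoc, ← Functor.map_comp, IsIso.inv_hom_id,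
      CategoryTheory.Functor.map_id, Category.id_comp]
  · apply CostructuredArrow.ext
    show f.left ≫ inv f.left = 𝟙 _
    rw [IsIso.hom_inv_id]
  · apply CostructuredArrow.ext
    show inv f.left ≫ f.left = 𝟙 _
    rw [IsIso.inv_hom_id]

lemma surj_iso (n : ℕ) :
    ∀ (A B : SimplexOver C) (f : A ⟶ B), A.left.len = n →
      Function.Surjective f.left.toOrderHom →
      IsIso ((Quotient.functor (elemRel C)).map f) := by
  induction n with
  | zero =>
    intro A B f hn hf
    have hinj : Function.Injective f.left.toOrderHom := by
      intro a b _
      have ha : (a : ℕ) < A.left.len + 1 := a.isLt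
      have hb : (b : ℕ) < A.left.len + 1 := b.isLt
      apply Fin.ext
      omega
    haveI := iso_of_bij f hinj hf
    infer_instance
  | succ k ih =>
    intro A B f hn hf
    by_cases hinj : Function.Injective f.left.toOrderHom
    · haveI := iso_of_bij f hinj hf
      infer_instance
    · obtain ⟨l, r, hom⟩ := A
      have hl : l = SimplexCategory.mk (k + 1) := by
        apply SimplexCategory.ext
        rw [SimplexCategory.len_mk]
        exact hn
      subst hl
      obtain ⟨⟨⟩⟩ := r
      obtain ⟨i, θ', hθ⟩ := eq_σ_comp_of_not_injective f.left hinj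
      have hθ'surj : Function.Surjective θ'.toOrderHom := by
        have h1 : Function.Surjective ((σ i ≫ θ').toOrderHom) := by rw [← hθ]; exact hf
        rw [comp_toOrderHom] at h1
        exact Function.Surjective.of_comp h1
      set Y := SimplexCategory.toCat.map θ' ≫ B.hom with hY
      have hhom : hom = SimplexCategory.toCat.map (σ i) ≫ Y := by
        rw [hY, ← Category.assoc, ← Functor.map_comp, ← hθ]
        exact (CostructuredArrow.w f).symm
      subst hhom
      let e : (CostructuredArrow.mk (SimplexCategory.toCat.map (σ i) ≫ Y) : SimplexOver C) ⟶
          CostructuredArrow.mk Y := CostructuredArrow.homMk (σ i) rfl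
      let f₂ : (CostructuredArrow.mk Y : SimplexOver C) ⟶ B := CostructuredArrow.homMk θ' rfl
      have hfact : f = e ≫ f₂ := by
        apply CostructuredArrow.ext
        exact hθ
      rw [hfact, Functor.map_comp]
      haveI := elem_iso i Y e rfl
      haveI := ih (CostructuredArrow.mk Y) B f₂ rfl hθ'surj
      infer_instance


end AuxLemmas

/-- Lemma 18: the quotient functor `Δ/C ⥤ [Δ/C]` is the localization of `Δ/C` at the
class of surjections: it sends surjections to isomorphisms, and any functor sending all
surjections to isomorphisms factors uniquely through it. -/
theorem quotient_is_localization_at_surjections (C : Type) [SmallCategory C]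
    (D : Type u) [Category.{v} D] (F : SimplexOver C ⥤ D)
    (hF : ∀ (A B : SimplexOver C) (f : A ⟶ B),
      Function.Surjective f.left.toOrderHom → IsIso (F.map f)) :
    (∀ (A B : SimplexOver C) (f : A ⟶ B),
      Function.Surjective f.left.toOrderHom →
        IsIso ((CategoryTheory.Quotient.functor (elemRel C)).map f)) ∧
    ∃! F' : SdQuot C ⥤ D, CategoryTheory.Quotient.functor (elemRel C) ⋙ F' = F := by
  constructor
  · intro A B f hf
    exact surj_iso A.left.len A B f rfl hf
  · have hcompat : ∀ (x y : SimplexOver C) (f₁ f₂ : x ⟶ y), elemRel C f₁ f₂ →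
        F.map f₁ = F.map f₂ := by
      rintro x y f₁ f₂ ⟨s, hs, -, hw, h₁, h₂⟩
      let σm : y ⟶ x := CostructuredArrow.homMk s hw.symm
      haveI : IsIso (F.map σm) := hF y x σm hs
      have e₁ : f₁ ≫ σm = 𝟙 x := CostructuredArrow.ext _ _ h₁
      have e₂ : f₂ ≫ σm = 𝟙 x := CostructuredArrow.ext _ _ h₂
      apply (cancel_mono (F.map σm)).mp
      rw [← F.map_comp, ← F.map_comp, e₁, e₂]
    exact ⟨CategoryTheory.Quotient.lift _ F hcompat,
      CategoryTheory.Quotient.lift_spec _ _ _,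
      fun Φ hΦ => CategoryTheory.Quotient.lift_unique _ _ _ Φ hΦ⟩
end

section
/- Let C be a small category and Sd(C) the full subcategory of [Δ/C] spanned by the nondegenerate simplices of N(C). If there is a nonidentity morphism X → Y in Sd(C), then dim(X) < dim(Y), where dim denotes the simplicial dimension. In particular, every isomorphism of Sd(C) is an identity, and the dimension function is a linear extension making Sd(C) a direct category. -/
open CategoryTheory

open SimplexCategory Limits in
lemma left_injective_of_nondeg {C : Type} [SmallCategory C] {A B : SimplexOver C}
    (hA : Nondeg A) (f : A ⟶ B) : Function.Injective f.left.toOrderHom := by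
  have fac : factorThruImage f.left ≫ image.ι f.left = f.left := image.fac f.left
  have hsurj : Function.Surjective (factorThruImage f.left).toOrderHom :=
    SimplexCategory.epi_iff_surjective.1 inferInstance
  have hinj : Function.Injective (image.ι f.left).toOrderHom :=
    SimplexCategory.mono_iff_injective.1 inferInstance
  have hw : SimplexCategory.toCat.map f.left ≫ B.hom = A.hom := CostructuredArrow.w f
  have hs : Function.Injective (factorThruImage f.left).toOrderHom := by
    apply hA _ _ hsurj
    refine ⟨SimplexCategory.toCat.map (image.ι f.left) ≫ B.hom, ?_⟩
    rw [← hw, ← Functor.map_comp_assoc, fac]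
  rw [← fac]
  intro a b hab
  exact hs (hinj hab)

lemma simplexOver_obj_ext {C : Type} [SmallCategory C] {A B : SimplexOver C}
    (h : A.left = B.left)
    (hh : A.hom = SimplexCategory.toCat.map (eqToHom h) ≫ B.hom) : A = B := by
  obtain ⟨al, ar, ah⟩ := A
  obtain ⟨bl, br, bh⟩ := B
  obtain rfl : al = bl := h
  obtain rfl : ar = br := Subsingleton.elim _ _
  simp only [eqToHom_refl, CategoryTheory.Functor.map_id, Category.id_comp] at hh
  rw [show ah = bh from hh]

/-- Lemma 19 and Corollary 20: in `Sd(C)`, morphisms weakly increase dimension, any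
morphism which does not strictly increase dimension is an identity, and every
isomorphism is an identity; `dimS` is a linear extension making `Sd(C)` a direct
category. -/
theorem sd_is_direct (C : Type) [SmallCategory C] :
    (∀ (X Y : Sd C) (_ : X ⟶ Y), dimS X ≤ dimS Y) ∧
    (∀ (X Y : Sd C) (f : X ⟶ Y),
      dimS X < dimS Y ∨ ∃ h : X = Y, f = eqToHom h) ∧
    (∀ (X Y : Sd C) (e : X ≅ Y), ∃ h : X = Y, e.hom = eqToHom h) := by
  have key : ∀ (X Y : Sd C) (f : X ⟶ Y), ∃ f₀ : X.obj.as ⟶ Y.obj.as,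
      (Quotient.functor (elemRel C)).map f₀ = f.hom ∧
      Function.Injective f₀.left.toOrderHom := by
    intro X Y f
    obtain ⟨f₀, hf₀⟩ := (Quotient.functor (elemRel C)).map_surjective f.hom
    exact ⟨f₀, hf₀, left_injective_of_nondeg X.property f₀⟩
  have hle : ∀ (X Y : Sd C) (_ : X ⟶ Y), dimS X ≤ dimS Y := by
    intro X Y f
    obtain ⟨f₀, _, hinj⟩ := key X Y f
    exact @SimplexCategory.len_le_of_mono _ _ f₀.left (SimplexCategory.mono_iff_injective.2 hinj)
  have hmain : ∀ (X Y : Sd C) (f : X ⟶ Y),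
      dimS X < dimS Y ∨ ∃ h : X = Y, f = eqToHom h := by
    intro X Y f
    rcases lt_or_eq_of_le (hle X Y f) with hlt | hd
    · exact Or.inl hlt
    · right
      obtain ⟨f₀, hf₀, hinj⟩ := key X Y f
      have h : X.obj.as.left = Y.obj.as.left := SimplexCategory.ext hd
      have hmono : Mono (f₀.left ≫ eqToHom h.symm) := by
        have : Mono f₀.left := SimplexCategory.mono_iff_injective.2 hinj
        infer_instance
      have h1 : f₀.left ≫ eqToHom h.symm = 𝟙 _ := SimplexCategory.eq_id_of_mono _
      have hleft : f₀.left = eqToHom h := by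
        have := h1 =≫ eqToHom h
        simpa using this
      have hobj : X.obj.as = Y.obj.as := by
        refine simplexOver_obj_ext h ?_
        rw [← hleft]
        exact (CostructuredArrow.w f₀).symm
      have hXY : X = Y := by
        cases X with
        | mk xo xp =>
          cases Y with
          | mk yo yp =>
            cases xo with
            | mk xa =>
              cases yo with
              | mk ya =>
                cases hobj
                rfl
      refine ⟨hXY, ?_⟩
      subst hXY
      have hleft' : f₀.left = 𝟙 _ := by simp [hleft]
      have hf : f₀ = 𝟙 X.obj.as := CostructuredArrow.hom_ext f₀ (𝟙 _) hleft'
      apply ObjectProperty.hom_ext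
      rw [← hf₀, hf]
      rfl
  refine ⟨hle, hmain, ?_⟩
  intro X Y e
  rcases hmain X Y e.hom with hlt | h
  · exact absurd (hle Y X e.inv) (by omega)
  · exact h
end

section
/- For every small category C, the double subdivision Sd²(C) = Sd(Sd(C)) is a partially ordered set: between any two objects there is at most one morphism, and the existence of morphisms in both directions forces the objects to be equal. -/
open CategoryTheory

namespace SdAux
open SimplexCategory Limits

def toFin {x : SimplexCategory} (a : SimplexCategory.toCat.obj x) : Fin (x.len+1) := a
def ofFin {x : SimplexCategory} (a : Fin (x.len+1)) : SimplexCategory.toCat.obj x := a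

def homMk {x : SimplexCategory} {a b : SimplexCategory.toCat.obj x} (h : toFin a ≤ toFin b) :
    a ⟶ b := (homOfLE h : toFin a ⟶ toFin b)

lemma le_of_hom' {x : SimplexCategory} {a b : SimplexCategory.toCat.obj x} (f : a ⟶ b) :
    toFin a ≤ toFin b := leOfHom (show toFin a ⟶ toFin b from f)

lemma obj_ext {x : SimplexCategory} {a b : SimplexCategory.toCat.obj x}
    (h : toFin a = toFin b) : a = b := h

lemma map_obj {x y : SimplexCategory} (f : x ⟶ y) (a : SimplexCategory.toCat.obj x) :
    (SimplexCategory.toCat.map f).toFunctor.obj a = ofFin (f.toOrderHom (toFin a)) := rfl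

instance homSub {x : SimplexCategory} (a b : SimplexCategory.toCat.obj x) :
    Subsingleton (a ⟶ b) := by
  show Subsingleton (toFin a ⟶ toFin b); infer_instance

variable {C : Type} [SmallCategory C]

lemma mor_injective {A B : SimplexOver C} (f : A ⟶ B) (hA : Nondeg A) :
    Function.Injective f.left.toOrderHom := by
  have fac : factorThruImage f.left ≫ image.ι f.left = f.left := image.fac f.left
  have hsurj : Function.Surjective (factorThruImage f.left).toOrderHom :=
    SimplexCategory.epi_iff_surjective.mp inferInstance
  have hinj2 : Function.Injective (image.ι f.left).toOrderHom :=
    SimplexCategory.mono_iff_injective.mp inferInstance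
  have hinj1 : Function.Injective (factorThruImage f.left).toOrderHom := by
    apply hA _ _ hsurj
    refine ⟨SimplexCategory.toCat.map (image.ι f.left) ≫ B.hom, ?_⟩
    rw [← Functor.map_comp_assoc, fac, CostructuredArrow.w f]
  have : f.left.toOrderHom =
      (image.ι f.left).toOrderHom.comp (factorThruImage f.left).toOrderHom := by
    rw [← SimplexCategory.comp_toOrderHom, fac]
  rw [this]
  exact hinj2.comp hinj1

lemma exists_rep {a b : SdQuot C} (u : a ⟶ b) : ∃ f : a.as ⟶ b.as, u = Quot.mk _ f :=
  Quot.inductionOn u (fun f => ⟨f, rfl⟩)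

lemma hom_dim_le {X Y : Sd C} (u : X ⟶ Y) : dimS X ≤ dimS Y := by
  obtain ⟨f, -⟩ := exists_rep (u.hom : X.obj ⟶ Y.obj)
  have := Fintype.card_le_of_injective _ (mor_injective f X.property)
  simpa [dimS] using this

lemma obj_eq_of_inj {A B : SimplexOver C} (f : A ⟶ B) (hlen : B.left.len ≤ A.left.len)
    (hinj : Function.Injective f.left.toOrderHom) : A = B := by
  obtain ⟨al, ar, ah⟩ := A
  obtain ⟨bl, br, bh⟩ := B
  have hle : al.len ≤ bl.len := by
    have := Fintype.card_le_of_injective _ hinj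
    simpa using this
  have hlb : al = bl := SimplexCategory.ext (le_antisymm hle hlen)
  subst hlb
  have : Mono f.left := SimplexCategory.mono_iff_injective.mpr hinj
  have hid : f.left = 𝟙 al := SimplexCategory.eq_id_of_mono f.left
  have hw := CostructuredArrow.w f
  simp only [hid, CategoryTheory.Functor.map_id, Category.id_comp] at hw
  obtain rfl : ah = bh := hw.symm
  obtain rfl : ar = br := Subsingleton.elim _ _
  rfl

lemma sd_obj_ext {X Y : Sd C} (h : X.obj.as = Y.obj.as) : X = Y := by
  obtain ⟨⟨xa⟩, xp⟩ := X
  obtain ⟨⟨ya⟩, yp⟩ := Y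
  cases h
  rfl

lemma eq_of_hom_dim_ge {X Y : Sd C} (u : X ⟶ Y) (h : dimS Y ≤ dimS X) : X = Y := by
  obtain ⟨f, -⟩ := exists_rep (u.hom : X.obj ⟶ Y.obj)
  exact sd_obj_ext (obj_eq_of_inj f h (mor_injective f X.property))

lemma endo_eq_id {X : Sd C} (u : X ⟶ X) : u = 𝟙 X := by
  obtain ⟨f, hf⟩ := exists_rep (u.hom : X.obj ⟶ X.obj)
  have : Mono f.left := SimplexCategory.mono_iff_injective.mpr (mor_injective f X.property)
  have hid : f = 𝟙 X.obj.as :=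
    CostructuredArrow.hom_ext _ _ (SimplexCategory.eq_id_of_mono f.left)
  apply ObjectProperty.hom_ext
  show u.hom = (𝟙 X.obj : X.obj ⟶ X.obj)
  rw [hf, hid]
  rfl


def ofF {m : ℕ} (a : Fin (m+1)) : SimplexCategory.toCat.obj (SimplexCategory.mk m) := a

lemma collapse_val {n : ℕ} (k : Fin (n+1)) (j : Fin (n+2)) :
    (σ k ≫ δ k.succ).toOrderHom j = if j = k.succ then k.castSucc else j := by
  simp only [comp_toOrderHom, OrderHom.comp_coe, Function.comp_apply]
  simp only [σ, δ, mkHom, Hom.toOrderHom_mk, OrderHom.coe_mk, Fin.succAboveOrderEmb]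
  rcases j with ⟨jv, hj⟩
  rcases k with ⟨kv, hk⟩
  simp [Fin.predAbove, Fin.succAbove, Fin.ext_iff, Fin.lt_def, Fin.le_def]
  split_ifs <;> simp_all <;> omega

lemma gobj {n : ℕ} (k : Fin (n+1)) (a : SimplexCategory.toCat.obj (SimplexCategory.mk (n+1))) :
    (SimplexCategory.toCat.map (σ k ≫ δ k.succ)).toFunctor.obj a =
      ofF (if toFin a = k.succ then k.castSucc else (toFin a : Fin (n+2))) := by
  show (σ k ≫ δ k.succ).toOrderHom (toFin a) = _
  rw [collapse_val]
  rfl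

lemma consec {B : SimplexOver (Sd C)} (hB : Nondeg B)
    (j j' : Fin (B.left.len + 1)) (hjj : (j : ℕ) + 1 = (j' : ℕ)) :
    dimS (B.hom.toFunctor.obj (ofFin j)) < dimS (B.hom.toFunctor.obj (ofFin j')) := by
  obtain ⟨bl, br, bh⟩ := B
  have hlt : (j' : ℕ) < bl.len + 1 := j'.isLt
  obtain ⟨n, hn⟩ : ∃ n, bl.len = n + 1 := ⟨bl.len - 1, by omega⟩
  have hbl : bl = SimplexCategory.mk (n+1) := SimplexCategory.ext (by rw [hn])
  clear hlt
  revert hjj hB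
  revert j j'
  subst hbl
  intro j j' hB hjj
  have hjlt : (j : ℕ) < n + 2 := j.isLt
  have hj'lt : (j' : ℕ) < n + 2 := j'.isLt
  obtain ⟨k, hj, hj'⟩ : ∃ k : Fin (n+1), j = Fin.castSucc k ∧ j' = Fin.succ k :=
    ⟨⟨(j : ℕ), by omega⟩, Fin.ext rfl, Fin.ext (by simp; omega)⟩
  subst hj hj'
  show dimS (bh.toFunctor.obj (ofF k.castSucc)) < dimS (bh.toFunctor.obj (ofF k.succ))
  by_contra hcon
  push_neg at hcon
  have e : ofF (m := n+1) k.castSucc ⟶ ofF k.succ := by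
    apply homMk
    show (k.castSucc : Fin (n+2)) ≤ k.succ
    simp [Fin.le_def]
  have heq : bh.toFunctor.obj (ofF k.castSucc) = bh.toFunctor.obj (ofF k.succ) :=
    eq_of_hom_dim_ge (bh.toFunctor.map e) hcon
  have he : bh.toFunctor.map e = eqToHom heq := by
    have h2 : bh.toFunctor.map e ≫ eqToHom heq.symm = 𝟙 _ :=
      endo_eq_id (bh.toFunctor.map e ≫ eqToHom heq.symm)
    have h3 : bh.toFunctor.map e = (bh.toFunctor.map e ≫ eqToHom heq.symm) ≫ eqToHom heq := by
      rw [Category.assoc, eqToHom_trans, eqToHom_refl, Category.comp_id]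
    rw [h3, h2, Category.id_comp]
  have hG : ∀ a : SimplexCategory.toCat.obj (SimplexCategory.mk (n+1)),
      bh.toFunctor.obj ((SimplexCategory.toCat.map (σ k ≫ δ k.succ)).toFunctor.obj a) = bh.toFunctor.obj a := by
    intro a
    rw [gobj]
    by_cases ha : toFin a = k.succ
    · rw [if_pos ha]
      have h2 : a = ofF k.succ := ha
      rw [h2]
      exact heq
    · rw [if_neg ha]
      rfl
  have key : ∀ a : SimplexCategory.toCat.obj (SimplexCategory.mk (n+1)),
      ∃ w : (SimplexCategory.toCat.map (σ k ≫ δ k.succ)).toFunctor.obj a ⟶ a,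
        bh.toFunctor.map w = eqToHom (hG a) := by
    intro a
    by_cases ha : toFin a = k.succ
    · have h2 : a = ofF k.succ := ha
      subst h2
      have h1 : (SimplexCategory.toCat.map (σ k ≫ δ k.succ)).toFunctor.obj (ofF k.succ) =
          ofF k.castSucc := by
        rw [gobj, if_pos (show toFin (ofF (m := n+1) k.succ) = k.succ from rfl)]
      refine ⟨eqToHom h1 ≫ e, ?_⟩
      simp only [Functor.map_comp, eqToHom_map, he, eqToHom_trans]
    · have h1 : (SimplexCategory.toCat.map (σ k ≫ δ k.succ)).toFunctor.obj a = a := by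
        rw [gobj, if_neg ha]
        rfl
      exact ⟨eqToHom h1, by rw [eqToHom_map]⟩
  have fac : bh = SimplexCategory.toCat.map (σ k) ≫
      (SimplexCategory.toCat.map (δ k.succ) ≫ bh) := by
    have hmapg : SimplexCategory.toCat.map (σ k) ≫
        (SimplexCategory.toCat.map (δ k.succ) ≫ bh) =
        SimplexCategory.toCat.map (σ k ≫ δ k.succ) ≫ bh := by
      rw [Functor.map_comp]
      rfl
    rw [hmapg]
    have hmap : ∀ (a b : SimplexCategory.toCat.obj (SimplexCategory.mk (n+1))) (f : a ⟶ b),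
        bh.toFunctor.map f = eqToHom (hG a).symm ≫
          (SimplexCategory.toCat.map (σ k ≫ δ k.succ) ≫ bh).toFunctor.map f ≫
          eqToHom ((hG b).symm).symm := by
      intro a b f
      obtain ⟨wa, hwa⟩ := key a
      obtain ⟨wb, hwb⟩ := key b
      have hcomm : wa ≫ f = (SimplexCategory.toCat.map (σ k ≫ δ k.succ)).toFunctor.map f ≫ wb :=
        Subsingleton.elim _ _
      have h3 := congrArg bh.toFunctor.map hcomm
      simp only [Functor.map_comp, hwa, hwb] at h3
      have h4 : bh.toFunctor.map f = eqToHom (hG a).symm ≫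
          bh.toFunctor.map ((SimplexCategory.toCat.map (σ k ≫ δ k.succ)).toFunctor.map f) ≫ eqToHom (hG b) := by
        rw [← h3, ← Category.assoc, eqToHom_trans, eqToHom_refl, Category.id_comp]
      rw [h4]
      rfl
    exact Cat.ext (CategoryTheory.Functor.ext
      (F := bh.toFunctor)
      (G := (SimplexCategory.toCat.map (σ k ≫ δ k.succ) ≫ bh).toFunctor)
      (fun a => (hG a).symm) hmap)
  have hsurj : Function.Surjective (σ k).toOrderHom :=
    SimplexCategory.epi_iff_surjective.mp inferInstance
  have hinj := hB (SimplexCategory.mk n) (σ k) hsurj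
    ⟨SimplexCategory.toCat.map (δ k.succ) ≫ bh, fac⟩
  have hδ : Function.Injective (δ (n := n) k.succ).toOrderHom :=
    SimplexCategory.mono_iff_injective.mp inferInstance
  have e1 : (σ k ≫ δ k.succ).toOrderHom k.castSucc = k.castSucc := by
    rw [collapse_val, if_neg (by simp [Fin.ext_iff])]
  have e2 : (σ k ≫ δ k.succ).toOrderHom k.succ = k.castSucc := by
    rw [collapse_val, if_pos rfl]
  rw [comp_toOrderHom] at e1 e2
  have h5 : (σ k).toOrderHom k.castSucc = (σ k).toOrderHom k.succ :=
    hδ (e1.trans e2.symm)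
  have h6 := hinj h5
  simp [Fin.ext_iff] at h6


lemma dims_strictMono {B : SimplexOver (Sd C)} (hB : Nondeg B) :
    StrictMono (fun i : Fin (B.left.len + 1) => dimS (B.hom.toFunctor.obj (ofFin i))) := by
  rw [Fin.strictMono_iff_lt_succ]
  intro i
  exact consec hB i.castSucc i.succ (by simp)

lemma dim_compat {A B : SimplexOver C} (h : A ⟶ B) (j : Fin (A.left.len + 1)) :
    B.hom.toFunctor.obj (ofFin (h.left.toOrderHom j)) = A.hom.toFunctor.obj (ofFin j) := by
  have hw := CostructuredArrow.w h
  calc B.hom.toFunctor.obj (ofFin (h.left.toOrderHom j))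
      = (SimplexCategory.toCat.map h.left ≫ B.hom).toFunctor.obj (ofFin j) := rfl
    _ = A.hom.toFunctor.obj (ofFin j) := by rw [hw]

end SdAux

open SdAux

/-- Theorem 21: the double subdivision `Sd²(C)` of any small category is a poset:
hom-sets have at most one element, and morphisms in both directions force equality. -/
theorem sd_sd_is_poset (C : Type) [SmallCategory C] :
    (∀ X Y : Sd (Sd C), Subsingleton (X ⟶ Y)) ∧
    (∀ X Y : Sd (Sd C), (X ⟶ Y) → (Y ⟶ X) → X = Y) := by
  constructor
  · intro X Y
    constructor
    intro u v
    obtain ⟨f, hf⟩ := exists_rep (u.hom : X.obj ⟶ Y.obj)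
    obtain ⟨g, hg⟩ := exists_rep (v.hom : X.obj ⟶ Y.obj)
    have hfg : f = g := by
      apply CostructuredArrow.hom_ext
      apply SimplexCategory.Hom.ext
      apply OrderHom.ext
      funext j
      apply (dims_strictMono Y.property).injective
      show dimS (Y.obj.as.hom.toFunctor.obj (ofFin (f.left.toOrderHom j))) =
        dimS (Y.obj.as.hom.toFunctor.obj (ofFin (g.left.toOrderHom j)))
      rw [dim_compat f j, dim_compat g j]
    apply ObjectProperty.hom_ext
    show (u.hom : X.obj ⟶ Y.obj) = v.hom
    rw [hf, hg, hfg]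
  · intro X Y u v
    obtain ⟨f, -⟩ := exists_rep (u.hom : X.obj ⟶ Y.obj)
    obtain ⟨g, -⟩ := exists_rep (v.hom : Y.obj ⟶ X.obj)
    have hgf : ∀ j, g.left.toOrderHom (f.left.toOrderHom j) = j := by
      intro j
      apply (dims_strictMono X.property).injective
      show dimS (X.obj.as.hom.toFunctor.obj (ofFin (g.left.toOrderHom (f.left.toOrderHom j)))) =
        dimS (X.obj.as.hom.toFunctor.obj (ofFin j))
      rw [dim_compat g _, dim_compat f j]
    have hfg : ∀ j, f.left.toOrderHom (g.left.toOrderHom j) = j := by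
      intro j
      apply (dims_strictMono Y.property).injective
      show dimS (Y.obj.as.hom.toFunctor.obj (ofFin (f.left.toOrderHom (g.left.toOrderHom j)))) =
        dimS (Y.obj.as.hom.toFunctor.obj (ofFin j))
      rw [dim_compat f _, dim_compat g j]
    have hinj : Function.Injective f.left.toOrderHom :=
      Function.LeftInverse.injective hgf
    have hsurj : Function.Surjective f.left.toOrderHom :=
      Function.RightInverse.surjective hfg
    have hlen : Y.obj.as.left.len ≤ X.obj.as.left.len := by
      have := Fintype.card_le_of_surjective _ hsurj
      simpa using this
    exact sd_obj_ext (obj_eq_of_inj f hlen hinj)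
end

section
/- If C is a direct category (i.e., it admits a functor to the poset ℕ sending nonidentity morphisms to strict inequalities), then its subdivision Sd(C) is a poset: there is at most one morphism between any two objects of Sd(C), and mutual morphisms force equality. -/
open CategoryTheory

section Aux

variable {C : Type} [SmallCategory C]

lemma map_homOfLE_congr {n : ℕ} (H : Fin n ⥤ C)
    {a a' b b' : Fin n} (ea : a = a') (eb : b = b') (h : a ≤ b) (h' : a' ≤ b') :
    H.map (homOfLE h) =
      eqToHom (congrArg H.obj ea) ≫ H.map (homOfLE h') ≫ eqToHom (congrArg H.obj eb.symm) := by
  subst ea; subst eb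
  simp

lemma map_comp_thin {n : ℕ} (H : Fin n ⥤ C)
    {a b c : Fin n} (hab : a ≤ b) (hbc : b ≤ c) :
    H.map (homOfLE (hab.trans hbc)) = H.map (homOfLE hab) ≫ H.map (homOfLE hbc) := by
  rw [← Functor.map_comp]
  rfl

variable (deg : C → ℕ)

lemma deg_step
    (hdeg : ∀ (X Y : C) (f : X ⟶ Y), (¬∃ h : X = Y, f = eqToHom h) → deg X < deg Y)
    (n : ℕ) (H : SimplexCategory.toCat.obj (SimplexCategory.mk n) ⟶ Cat.of C)
    (hnd : Nondeg (CostructuredArrow.mk H)) (k : Fin n) :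
    deg (H.toFunctor.obj k.castSucc) < deg (H.toFunctor.obj k.succ) := by
  obtain ⟨p, rfl⟩ : ∃ p, n = p + 1 := ⟨n - 1, (Nat.succ_pred_eq_of_pos k.pos).symm⟩
  by_contra hlt
  set F : Fin (p + 2) ⥤ C := H.toFunctor with hF
  have hstep : ∃ h : F.obj k.castSucc = F.obj k.succ,
      F.map (homOfLE (Fin.castSucc_le_succ k)) = eqToHom h := by
    by_contra hc
    exact hlt (hdeg _ _ _ hc)
  obtain ⟨hO, hM⟩ := hstep
  -- the collapse map
  set c : Fin (p + 2) → Fin (p + 2) :=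
    fun i => (SimplexCategory.σ k ≫ SimplexCategory.δ k.castSucc).toOrderHom i with hc
  have hcdef : ∀ i, c i = Fin.succAbove k.castSucc (Fin.predAbove k i) := fun _ => rfl
  have hc1 : ∀ i, i ≠ k.castSucc → c i = i := by
    intro i hi; rw [hcdef, Fin.succAbove_predAbove hi]
  have hc2 : c k.castSucc = k.succ := by
    rw [hcdef, Fin.predAbove_castSucc_self, Fin.succAbove_castSucc_self]
  have cmono : Monotone c := (SimplexCategory.σ k ≫ SimplexCategory.δ k.castSucc).toOrderHom.monotone
  have hobjc : ∀ i, F.obj i = F.obj (c i) := by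
    intro i
    by_cases hi : i = k.castSucc
    · subst hi; rw [hc2]; exact hO
    · rw [hc1 i hi]
  -- the core computation
  have core : ∀ (i j : Fin (p + 2)) (hij : i ≤ j),
      F.map (homOfLE hij) =
        eqToHom (hobjc i) ≫ F.map (homOfLE (cmono hij)) ≫ eqToHom (hobjc j).symm := by
    intro i j hij
    by_cases hi : i = k.castSucc
    · subst hi
      by_cases hj : j = k.castSucc
      · subst hj
        rw [Subsingleton.elim (homOfLE hij) (𝟙 (k.castSucc : Fin (p+2))),
          Subsingleton.elim (homOfLE (cmono hij)) (𝟙 (c k.castSucc))]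
        simp
      · have hkj : k.succ ≤ j := Fin.castSucc_lt_iff_succ_le.mp (lt_of_le_of_ne hij (Ne.symm hj))
        rw [map_homOfLE_congr F hc2 (hc1 j hj) (cmono hij) hkj]
        have : hij = (Fin.castSucc_le_succ k).trans hkj := rfl
        rw [this, map_comp_thin F (Fin.castSucc_le_succ k) hkj, hM]
        simp [eqToHom_trans_assoc]
    · by_cases hj : j = k.castSucc
      · subst hj
        have hik : i ≤ k.castSucc := hij
        have hik' : i ≤ k.succ := hik.trans (Fin.castSucc_le_succ k)
        rw [map_homOfLE_congr F (hc1 i hi) hc2 (cmono hij) hik']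
        have : hik' = hik.trans (Fin.castSucc_le_succ k) := rfl
        rw [this, map_comp_thin F hik (Fin.castSucc_le_succ k), hM]
        simp
      · rw [map_homOfLE_congr F (hc1 i hi) (hc1 j hj) (cmono hij) hij]
        simp
  -- nondegeneracy contradiction
  have hfact : H = SimplexCategory.toCat.map (SimplexCategory.σ k) ≫
      (SimplexCategory.toCat.map (SimplexCategory.δ k.castSucc) ≫ H) := by
    rw [← Category.assoc, ← SimplexCategory.toCat.map_comp]
    apply Cat.Hom.ext
    show F = _
    refine CategoryTheory.Functor.ext hobjc ?_
    intro i j f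
    have e1 : f = homOfLE (leOfHom f) := Subsingleton.elim _ _
    have e2 : (SimplexCategory.toCat.map
        (SimplexCategory.σ k ≫ SimplexCategory.δ k.castSucc)).toFunctor.map f
        = homOfLE (cmono (leOfHom f)) := Subsingleton.elim (α := (c i ⟶ c j)) _ _
    show F.map f = _ ≫ F.map ((SimplexCategory.toCat.map
        (SimplexCategory.σ k ≫ SimplexCategory.δ k.castSucc)).toFunctor.map f) ≫ _
    rw [e2]
    conv_lhs => rw [e1]
    exact core i j (leOfHom f)
  have hsurj : Function.Surjective (SimplexCategory.σ k).toOrderHom :=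
    SimplexCategory.epi_iff_surjective.mp inferInstance
  have hinj := hnd (SimplexCategory.mk p) (SimplexCategory.σ k) hsurj
    ⟨SimplexCategory.toCat.map (SimplexCategory.δ k.castSucc) ≫ H, hfact⟩
  have : (SimplexCategory.σ k).toOrderHom k.castSucc = (SimplexCategory.σ k).toOrderHom k.succ := by
    show Fin.predAbove k k.castSucc = Fin.predAbove k k.succ
    rw [Fin.predAbove_castSucc_self, Fin.predAbove_succ_self]
  exact (Fin.castSucc_lt_succ (i := k)).ne (hinj this)

end Aux

section Aux2

variable {C : Type} [SmallCategory C] (deg : C → ℕ)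

lemma deg_strict
    (hdeg : ∀ (X Y : C) (f : X ⟶ Y), (¬∃ h : X = Y, f = eqToHom h) → deg X < deg Y)
    (A : SimplexOver C) (hA : Nondeg A) :
    StrictMono (fun i : Fin (A.left.len + 1) => deg (A.hom.toFunctor.obj i)) := by
  rw [Fin.strictMono_iff_lt_succ]
  intro k
  have hmk : A = CostructuredArrow.mk A.hom := CostructuredArrow.eq_mk A
  exact deg_step deg hdeg A.left.len A.hom (hmk ▸ hA) k

lemma hom_left_obj (A B : SimplexOver C) (f : A ⟶ B) (i : Fin (A.left.len + 1)) :
    B.hom.toFunctor.obj (f.left.toOrderHom i) = A.hom.toFunctor.obj i := by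
  have := Functor.congr_obj (congrArg Cat.Hom.toFunctor (CostructuredArrow.w f)) i
  exact this

lemma hom_subsingleton (A B : SimplexOver C)
    (hB : StrictMono (fun i : Fin (B.left.len + 1) => deg (B.hom.toFunctor.obj i))) :
    Subsingleton (A ⟶ B) := by
  constructor
  intro f g
  have hleft : f.left = g.left := by
    apply SimplexCategory.Hom.ext
    apply OrderHom.ext
    funext i
    apply hB.injective
    show deg (B.hom.toFunctor.obj (f.left.toOrderHom i)) = deg (B.hom.toFunctor.obj (g.left.toOrderHom i))
    rw [hom_left_obj A B f i, hom_left_obj A B g i]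
  apply CommaMorphism.ext
  · exact hleft
  · exact Subsingleton.elim _ _

lemma hom_strictMono (A B : SimplexOver C)
    (hA : StrictMono (fun i : Fin (A.left.len + 1) => deg (A.hom.toFunctor.obj i)))
    (hB : StrictMono (fun i : Fin (B.left.len + 1) => deg (B.hom.toFunctor.obj i)))
    (f : A ⟶ B) : StrictMono f.left.toOrderHom := by
  intro i j hij
  have h1 : deg (A.hom.toFunctor.obj i) < deg (A.hom.toFunctor.obj j) := hA hij
  rw [← hom_left_obj A B f i, ← hom_left_obj A B f j] at h1
  exact (hB.lt_iff_lt).mp h1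

lemma antisym_obj (A B : SimplexOver C)
    (hA : StrictMono (fun i : Fin (A.left.len + 1) => deg (A.hom.toFunctor.obj i)))
    (hB : StrictMono (fun i : Fin (B.left.len + 1) => deg (B.hom.toFunctor.obj i)))
    (f : A ⟶ B) (g : B ⟶ A) : A = B := by
  have hf := hom_strictMono deg A B hA hB f
  have hg := hom_strictMono deg B A hB hA g
  have c1 : A.left.len + 1 ≤ B.left.len + 1 := by
    simpa using Fintype.card_le_of_injective _ hf.injective
  have c2 : B.left.len + 1 ≤ A.left.len + 1 := by
    simpa using Fintype.card_le_of_injective _ hg.injective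
  have hlen : A.left.len = B.left.len := by omega
  obtain ⟨al, ar, ah⟩ := A
  obtain ⟨bl, br, bh⟩ := B
  simp only [CostructuredArrow.mk] at *
  have : al = bl := SimplexCategory.ext hlen
  subst this
  obtain ⟨⟨⟩⟩ := ar
  obtain ⟨⟨⟩⟩ := br
  haveI : Mono f.left := SimplexCategory.mono_iff_injective.mpr hf.injective
  have hid : f.left = 𝟙 al := SimplexCategory.eq_id_of_mono f.left
  have hw := CostructuredArrow.w f
  rw [hid] at hw
  simp only [CategoryTheory.Functor.map_id, Category.id_comp] at hw
  -- hw : bh = ah  (or ah = bh)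
  congr 1
  exact hw.symm

end Aux2


/-- Remark 22: if `C` is a direct category (it admits a degree function to `ℕ` sending
nonidentity morphisms to strict inequalities), then `Sd(C)` is a poset. -/
theorem sd_is_poset_of_direct (C : Type) [SmallCategory C] (deg : C → ℕ)
    (hdeg : ∀ (X Y : C) (f : X ⟶ Y),
      (¬∃ h : X = Y, f = eqToHom h) → deg X < deg Y) :
    (∀ X Y : Sd C, Subsingleton (X ⟶ Y)) ∧
    (∀ X Y : Sd C, (X ⟶ Y) → (Y ⟶ X) → X = Y) := by
  constructor
  · intro X Y
    have hsub : Subsingleton (X.obj.as ⟶ Y.obj.as) :=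
      hom_subsingleton deg X.obj.as Y.obj.as (deg_strict deg hdeg Y.obj.as Y.property)
    have key : ∀ a b : Quot (@HomRel.CompClosure _ _ (elemRel C) X.obj.as Y.obj.as), a = b := by
      intro a b
      induction a using Quot.ind with | _ f =>
      induction b using Quot.ind with | _ g =>
      exact congrArg _ (Subsingleton.elim f g)
    exact ⟨fun a b => InducedCategory.hom_ext (key _ _)⟩
  · intro X Y F G
    obtain ⟨f, -⟩ := Quot.exists_rep
      (F.hom : Quot (@HomRel.CompClosure _ _ (elemRel C) X.obj.as Y.obj.as))
    obtain ⟨g, -⟩ := Quot.exists_rep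
      (G.hom : Quot (@HomRel.CompClosure _ _ (elemRel C) Y.obj.as X.obj.as))
    have hobj : X.obj.as = Y.obj.as :=
      antisym_obj deg X.obj.as Y.obj.as
        (deg_strict deg hdeg X.obj.as X.property)
        (deg_strict deg hdeg Y.obj.as Y.property) f g
    obtain ⟨⟨xa⟩, hX⟩ := X
    obtain ⟨⟨ya⟩, hY⟩ := Y
    cases hobj
    rfl
end
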